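/- For all x ∈ [0, 0.9], x − (6/π)·arcsin(x/2) ≤ 0.047·x. -/
import Mathlib


/-- For `x ∈ [0, 0.9]`, `x − (6/π)·arcsin(x/2) ≤ 0.047·x`. -/
theorem gap_le_small_multiple :
    ∀ x ∈ Set.Icc (0 : ℝ) 0.9,
      x - (6 / Real.pi) * Real.arcsin (x / 2) ≤ 0.047 * x := by
  intro x hx
  obtain ⟨hx0, hx9⟩ := hx
  have hpi := Real.pi_pos
  have hy0 : (0:ℝ) ≤ x / 2 := by linarith
  have hy1 : x / 2 ≤ 1 := by linarith
  have harc0 : 0 ≤ Real.arcsin (x / 2) := Real.arcsin_nonneg.2 hy0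
  have hsin : Real.sin (Real.arcsin (x / 2)) = x / 2 :=
    Real.sin_arcsin (by linarith) hy1
  have hself : x / 2 ≤ Real.arcsin (x / 2) := by
    have := Real.sin_le harc0
    rwa [hsin] at this
  have hmul : (6 / Real.pi) * (x / 2) ≤ (6 / Real.pi) * Real.arcsin (x / 2) :=
    mul_le_mul_of_nonneg_left hself (by positivity)
  have hpilt : Real.pi < 3.141593 := Real.pi_lt_d6
  have key : 0.953 * x ≤ (6 / Real.pi) * (x / 2) := by
    rw [div_mul_eq_mul_div, le_div_iff₀ hpi]
    nlinarith
  linarith
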